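/- Let k ≥ 3, let G be a (k−2)-connected k-colorable chordal graph, let T be a clique of G with |T| ≥ k−1, let v ∈ T, and let α and β be k-colorings of G. If C^c_k(G,T) is a forest in which the α-node and the β-node lie in the same connected component, so that there is a unique α-β-path P, then C^c_k(G, T∖{v}) is a forest with a unique α-β-path P', and w(P') ≤ w(P). -/

import Mathlib

open SimpleGraph

/-- A proper `k`-coloring of a graph. -/
def IsColoring {W : Type*} (G : SimpleGraph W) (k : ℕ) (α : W → Fin k) : Prop :=
  ∀ u v : W, G.Adj u v → α u ≠ α v

/-- The `k`-color graph `C_k(G)`: nodes are proper `k`-colorings of `G`,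
two colorings being adjacent iff they differ on exactly one vertex. -/
def colorGraph {W : Type*} (G : SimpleGraph W) (k : ℕ) :
    SimpleGraph {α : W → Fin k // IsColoring G k α} where
  Adj α β := ∃! w, α.1 w ≠ β.1 w
  symm := by
    constructor
    rintro α β ⟨w, hw, hu⟩
    exact ⟨w, hw.symm, fun u hu' => hu u hu'.symm⟩
  loopless := by
    constructor
    rintro α ⟨w, hw, -⟩
    exact hw rfl

/-- The subgraph of a labeled graph consisting of the edges between
equally labeled nodes. -/
def sameLabelSub {N L : Type*} (H : SimpleGraph N) (f : N → L) : SimpleGraph N where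
  Adj x y := H.Adj x y ∧ f x = f y
  symm := ⟨fun _ _ h => ⟨h.1.symm, h.2.symm⟩⟩
  loopless := ⟨fun x h => H.irrefl h.1⟩

/-- The quotient graph obtained from a labeled graph by contracting every
(maximal) connected set of equally labeled nodes (i.e. every label component)
into a single node. -/
def quotGraph {N L : Type*} (H : SimpleGraph N) (f : N → L) :
    SimpleGraph (sameLabelSub H f).ConnectedComponent where
  Adj c d := c ≠ d ∧ ∃ a b, (sameLabelSub H f).connectedComponentMk a = c ∧
      (sameLabelSub H f).connectedComponentMk b = d ∧ H.Adj a b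
  symm := by
    constructor
    rintro c d ⟨hne, a, b, ha, hb, hab⟩
    exact ⟨hne.symm, b, a, hb, ha, hab.symm⟩
  loopless := ⟨fun c h => h.1 rfl⟩

/-- The common label of a label component. -/
def quotLabel {N L : Type*} (H : SimpleGraph N) (f : N → L) :
    (sameLabelSub H f).ConnectedComponent → L :=
  SimpleGraph.ConnectedComponent.lift f (by
    intro v w p hp
    clear hp
    induction p with
    | nil => rfl
    | cons h _ ih => exact (show H.Adj _ _ ∧ f _ = f _ from h).2.trans ih)

/-- The label of a coloring: its restriction to the terminal set `T`. -/
def csgLabelFun {W : Type*} (G : SimpleGraph W) (k : ℕ) (T : Set W) :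
    {α : W → Fin k // IsColoring G k α} → (T → Fin k) :=
  fun α t => α.1 t.1

/-- The node set of the contracted solution graph: the label components. -/
abbrev CSGNode {W : Type*} (G : SimpleGraph W) (k : ℕ) (T : Set W) :=
  (sameLabelSub (colorGraph G k) (csgLabelFun G k T)).ConnectedComponent

/-- The contracted solution graph `C^c_k(G,T)`. -/
def CSG {W : Type*} (G : SimpleGraph W) (k : ℕ) (T : Set W) : SimpleGraph (CSGNode G k T) :=
  quotGraph (colorGraph G k) (csgLabelFun G k T)

/-- The `γ`-node of the contracted solution graph: the label component containing `γ`. -/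
def csgNode {W : Type*} (G : SimpleGraph W) (k : ℕ) (T : Set W)
    (γ : {α : W → Fin k // IsColoring G k α}) : CSGNode G k T :=
  (sameLabelSub (colorGraph G k) (csgLabelFun G k T)).connectedComponentMk γ

/-- The label of a node of the contracted solution graph: the common restriction
to `T` of its colorings. -/
def csgLabel {W : Type*} (G : SimpleGraph W) (k : ℕ) (T : Set W) :
    CSGNode G k T → (T → Fin k) :=
  quotLabel (colorGraph G k) (csgLabelFun G k T)

/-- The restriction of a proper coloring to an induced subgraph. -/
def restrictColoring {W : Type*} (G : SimpleGraph W) (k : ℕ) (S : Set W)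
    (γ : {α : W → Fin k // IsColoring G k α}) :
    {α : S → Fin k // IsColoring (G.induce S) k α} :=
  ⟨fun u => γ.1 u.1, fun u w h => γ.2 u.1 w.1 h⟩

/-- A graph is chordal if it contains no induced cycle of length greater than 3. -/
def Chordal {W : Type*} (G : SimpleGraph W) : Prop :=
  ∀ n : ℕ, 4 ≤ n → IsEmpty (SimpleGraph.cycleGraph n ↪g G)

/-- `S` is a vertex cut: `G - S` is disconnected. -/
def IsVertexCut {W : Type*} (G : SimpleGraph W) (S : Set W) : Prop :=
  ¬ (G.induce Sᶜ).Preconnected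

/-- `G` is `l`-connected. -/
def LConnected {W : Type*} (G : SimpleGraph W) (l : ℕ) : Prop :=
  G.Connected ∧ l + 1 ≤ Nat.card W ∧ ∀ S : Set W, IsVertexCut G S → l ≤ S.ncard

/-- A labeled graph `(H,ℓ)`, whose labels are `k`-colorings of the complete graph
on a vertex (type) `S`, is an `(|S|,k)`-color-complete graph. -/
def IsColorComplete {N S : Type*} (k : ℕ) (H : SimpleGraph N) (ℓ : N → S → Fin k) : Prop :=
  (∀ x, Function.Injective (ℓ x)) ∧
  (∀ f : S → Fin k, Function.Injective f → ∃! x, ℓ x = f) ∧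
  (∀ x y, H.Adj x y ↔ ∃! s, ℓ x s ≠ ℓ y s)

/-- The injective neighborhood property. -/
def INP {N L : Type*} (H : SimpleGraph N) (ℓ : N → L) : Prop :=
  ∀ u v w : N, H.Adj u v → H.Adj u w → v ≠ w → ℓ v ≠ ℓ w

/-- The weight `w(P)` of a walk `P` in a labeled graph: the sum over the vertices `x`
of `P` of the number of colors used by labels of neighbors of `x` in `P` but not by
the label of `x`. -/
noncomputable def walkWeight {N S : Type*} {k : ℕ} {G : SimpleGraph N} (ℓ : N → S → Fin k)
    {a b : N} (P : G.Walk a b) : ℕ :=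
  letI := Classical.decEq N
  ∑ x ∈ P.support.toFinset,
    ((⋃ y ∈ P.toSubgraph.neighborSet x, Set.range (ℓ y)) \ Set.range (ℓ x)).ncard


/-! ### Auxiliary lemmas -/

section Abstract

variable {N L₁ L₂ : Type*} {Γ : SimpleGraph N} {f : N → L₁} {g : N → L₂}

/-- If `f` refines `g`, the identity is a hom between the same-label subgraphs. -/
def sameLabelHom (hfg : ∀ a b : N, f a = f b → g a = g b) :
    sameLabelSub Γ f →g sameLabelSub Γ g where
  toFun := id
  map_rel' := fun h => ⟨h.1, hfg _ _ h.2⟩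

variable (hfg : ∀ a b : N, f a = f b → g a = g b)

/-- Projection from fine label components to coarse label components. -/
def quotProj : (sameLabelSub Γ f).ConnectedComponent →
    (sameLabelSub Γ g).ConnectedComponent :=
  ConnectedComponent.map (sameLabelHom hfg)

lemma quotProj_mk (a : N) :
    quotProj hfg ((sameLabelSub Γ f).connectedComponentMk a)
      = (sameLabelSub Γ g).connectedComponentMk a := rfl

/-- Walks in the coarse same-label subgraph project to walks inside one fiber. -/
lemma fiber_walk_aux {a b : N} (w : (sameLabelSub Γ g).Walk a b) :
    ∃ W : (quotGraph Γ f).Walk ((sameLabelSub Γ f).connectedComponentMk a)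
      ((sameLabelSub Γ f).connectedComponentMk b),
      ∀ e ∈ W.edges, (Sym2.map (quotProj hfg) e).IsDiag := by
  induction w with
  | nil => exact ⟨.nil, by simp⟩
  | @cons a c b h w ih =>
    obtain ⟨W, hW⟩ := ih
    by_cases hac : (sameLabelSub Γ f).connectedComponentMk a
        = (sameLabelSub Γ f).connectedComponentMk c
    · refine ⟨W.copy hac.symm rfl, ?_⟩
      rw [Walk.edges_copy]; exact hW
    · have hadj' : (quotGraph Γ f).Adj ((sameLabelSub Γ f).connectedComponentMk a)
          ((sameLabelSub Γ f).connectedComponentMk c) := ⟨hac, a, c, rfl, rfl, h.1⟩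
      refine ⟨.cons hadj' W, ?_⟩
      intro e he
      rw [Walk.edges_cons, List.mem_cons] at he
      rcases he with rfl | he
      · rw [Sym2.map_pair_eq, Sym2.mk_isDiag_iff, quotProj_mk, quotProj_mk]
        exact ConnectedComponent.sound h.reachable
      · exact hW e he

/-- Walks in the coarse quotient graph lift to walks in the fine quotient graph. -/
lemma lift_walk : ∀ {x' y' : (sameLabelSub Γ g).ConnectedComponent}
    (p : (quotGraph Γ g).Walk x' y') {a b : N},
    (sameLabelSub Γ g).connectedComponentMk a = x' →
    (sameLabelSub Γ g).connectedComponentMk b = y' →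
    ∃ W : (quotGraph Γ f).Walk ((sameLabelSub Γ f).connectedComponentMk a)
      ((sameLabelSub Γ f).connectedComponentMk b),
      ∀ e ∈ W.edges, (Sym2.map (quotProj hfg) e).IsDiag ∨
        Sym2.map (quotProj hfg) e ∈ p.edges := by
  intro x' y' p
  induction p with
  | nil =>
    intro a b ha hb
    obtain ⟨w⟩ := (ConnectedComponent.eq).mp (ha.trans hb.symm)
    obtain ⟨W, hW⟩ := fiber_walk_aux hfg w
    exact ⟨W, fun e he => Or.inl (hW e he)⟩
  | @cons x' z' y' h p ih =>
    intro a b ha hb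
    obtain ⟨hne, c, d, hc, hd, hcd⟩ := id h
    obtain ⟨w₁⟩ := (ConnectedComponent.eq).mp (ha.trans hc.symm)
    obtain ⟨W₁, hW₁⟩ := fiber_walk_aux hfg w₁
    have hcd' : (quotGraph Γ f).Adj ((sameLabelSub Γ f).connectedComponentMk c)
        ((sameLabelSub Γ f).connectedComponentMk d) := by
      refine ⟨fun heq => hne ?_, c, d, rfl, rfl, hcd⟩
      rw [← hc, ← hd, ← quotProj_mk hfg c, ← quotProj_mk hfg d, heq]
    obtain ⟨W₂, hW₂⟩ := ih hd hb
    refine ⟨W₁.append (Walk.cons hcd' W₂), ?_⟩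
    intro e he
    rw [Walk.edges_append, List.mem_append] at he
    rcases he with he | he
    · exact Or.inl (hW₁ e he)
    · rw [Walk.edges_cons, List.mem_cons] at he
      rcases he with rfl | he
      · right
        have heq : Sym2.map (quotProj hfg) s((sameLabelSub Γ f).connectedComponentMk c,
            (sameLabelSub Γ f).connectedComponentMk d) = s(x', z') := by
          rw [Sym2.map_pair_eq, quotProj_mk, quotProj_mk, hc, hd]
        rw [heq, Walk.edges_cons]
        exact List.mem_cons_self
      · rcases hW₂ e he with hdiag | hmem
        · exact Or.inl hdiag
        · exact Or.inr (by rw [Walk.edges_cons]; exact List.mem_cons_of_mem _ hmem)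

include hfg in
/-- Contracting the fibers of a refinement preserves acyclicity. -/
theorem quotGraph_acyclic (hf : IsAcyclic (quotGraph Γ f)) :
    IsAcyclic (quotGraph Γ g) := by
  rw [isAcyclic_iff_forall_adj_isBridge]
  intro x' y' hadj
  rw [isBridge_iff_adj_and_forall_walk_mem_edges]
  intro p
  obtain ⟨hne, a, b, ha, hb, hab⟩ := hadj
  have hXY : (quotGraph Γ f).Adj ((sameLabelSub Γ f).connectedComponentMk a)
      ((sameLabelSub Γ f).connectedComponentMk b) := by
    refine ⟨fun heq => hne ?_, a, b, rfl, rfl, hab⟩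
    rw [← ha, ← hb, ← quotProj_mk hfg a, ← quotProj_mk hfg b, heq]
  have hbr := (isAcyclic_iff_forall_adj_isBridge.mp hf) hXY
  rw [isBridge_iff_adj_and_forall_walk_mem_edges] at hbr
  obtain ⟨W, hW⟩ := lift_walk hfg p ha hb
  rcases hW _ (hbr W) with hdiag | hmem
  · rw [Sym2.map_pair_eq, Sym2.mk_isDiag_iff, quotProj_mk, quotProj_mk, ha, hb] at hdiag
    exact absurd hdiag hne
  · rwa [Sym2.map_pair_eq, quotProj_mk, quotProj_mk, ha, hb] at hmem

/-- Walks in the fine quotient graph push forward to walks in the coarse one. -/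
lemma push_walk : ∀ {X Y : (sameLabelSub Γ f).ConnectedComponent}
    (W : (quotGraph Γ f).Walk X Y),
    ∃ Q : (quotGraph Γ g).Walk (quotProj hfg X) (quotProj hfg Y),
      ∀ e ∈ Q.edges, ∃ e' ∈ W.edges, e = Sym2.map (quotProj hfg) e' := by
  intro X Y W
  induction W with
  | nil => exact ⟨.nil, by simp⟩
  | @cons X Z Y h W ih =>
    obtain ⟨Q, hQ⟩ := ih
    by_cases hXZ : quotProj hfg X = quotProj hfg Z
    · refine ⟨Q.copy hXZ.symm rfl, ?_⟩
      rw [Walk.edges_copy]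
      intro e he
      obtain ⟨e', he', rfl⟩ := hQ e he
      exact ⟨e', List.mem_cons_of_mem _ he', rfl⟩
    · obtain ⟨hne, a, b, ha, hb, hab⟩ := h
      have hadj : (quotGraph Γ g).Adj (quotProj hfg X) (quotProj hfg Z) :=
        ⟨hXZ, a, b, (quotProj_mk hfg a).symm.trans (congrArg _ ha),
          (quotProj_mk hfg b).symm.trans (congrArg _ hb), hab⟩
      refine ⟨Walk.cons hadj Q, ?_⟩
      intro e he
      rw [Walk.edges_cons, List.mem_cons] at he
      rcases he with rfl | he
      · exact ⟨s(X, Z), List.mem_cons_self, (Sym2.map_pair_eq _ _ _).symm⟩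
      · obtain ⟨e', he', rfl⟩ := hQ e he
        exact ⟨e', List.mem_cons_of_mem _ he', rfl⟩

end Abstract

section Concrete

variable {V : Type} [Fintype V] [DecidableEq V] {G : SimpleGraph V} {k : ℕ}
  {T : Set V} {v : V}

/-- The labeling by `T` refines the labeling by `T \ {v}`. -/
lemma csgHfg (G : SimpleGraph V) (k : ℕ) (T : Set V) (v : V) :
    ∀ a b : {f : V → Fin k // IsColoring G k f},
      csgLabelFun G k T a = csgLabelFun G k T b →
      csgLabelFun G k (T \ {v}) a = csgLabelFun G k (T \ {v}) b :=
  fun _ _ h => funext fun t => congrFun h ⟨t.1, t.2.1⟩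

lemma csgLabel_mk (G : SimpleGraph V) (k : ℕ) (T : Set V)
    (γ : {f : V → Fin k // IsColoring G k f}) :
    csgLabel G k T ((sameLabelSub (colorGraph G k) (csgLabelFun G k T)).connectedComponentMk γ)
      = csgLabelFun G k T γ := rfl

/-- The key lemma: for an edge of `CSG G k T` not collapsed by forgetting `v`,
new colors of the projected labels are new colors of the original labels. -/
lemma csg_key (hT : G.IsClique T) {X Y : CSGNode G k T}
    (hXY : (CSG G k T).Adj X Y)
    (hne : quotProj (csgHfg G k T v) X ≠ quotProj (csgHfg G k T v) Y) :
    Set.range (csgLabel G k (T \ {v}) (quotProj (csgHfg G k T v) Y)) \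
      Set.range (csgLabel G k (T \ {v}) (quotProj (csgHfg G k T v) X)) ⊆
    Set.range (csgLabel G k T Y) \ Set.range (csgLabel G k T X) := by
  obtain ⟨hne₀, a, b, ha, hb, hab⟩ := hXY
  subst ha; subst hb
  have hab' := hab
  obtain ⟨w, hw, huniq⟩ := hab'
  have hwv : w ≠ v := by
    rintro rfl
    apply hne
    rw [quotProj_mk, quotProj_mk]
    apply ConnectedComponent.sound
    refine Adj.reachable ⟨hab, funext fun t => ?_⟩
    by_contra hne2
    exact t.2.2 (huniq t.1 hne2)
  rw [quotProj_mk, quotProj_mk, csgLabel_mk, csgLabel_mk, csgLabel_mk, csgLabel_mk]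
  rintro c ⟨⟨t, htc⟩, hcx⟩
  refine ⟨⟨⟨t.1, t.2.1⟩, htc⟩, ?_⟩
  rintro ⟨s, hsc⟩
  by_cases hsv : s.1 = v
  · have hbv : a.1 v = b.1 v := by
      by_contra hne2
      exact hwv (huniq v hne2).symm
    have h1 : b.1 t.1 = b.1 v := by
      show csgLabelFun G k (T \ {v}) b t = b.1 v
      rw [htc]
      show c = b.1 v
      rw [← hbv, ← hsv]
      exact hsc.symm
    have htne : t.1 ≠ v := t.2.2
    have hadjtv : G.Adj t.1 v := hT t.2.1 (hsv ▸ s.2) htne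
    exact b.2 t.1 v hadjtv h1
  · exact hcx ⟨⟨s.1, s.2, hsv⟩, hsc⟩

lemma ncard_biUnion_le {ι : Type*} [DecidableEq ι] {m : ℕ} (s : Finset ι)
    (f : ι → Set (Fin m)) :
    (⋃ i ∈ s, f i).ncard ≤ ∑ i ∈ s, (f i).ncard := by
  classical
  induction s using Finset.induction with
  | empty => simp
  | @insert a s hnotmem ih =>
    rw [Finset.sum_insert hnotmem, Finset.set_biUnion_insert]
    exact (Set.ncard_union_le _ _).trans (Nat.add_le_add_left ih _)

/-- The weight of a projected walk is at most the weight of the original walk. -/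
lemma csg_weight_le (hT : G.IsClique T)
    {X₀ Y₀ : CSGNode G k T} {x₀ y₀ : CSGNode G k (T \ {v})}
    (P : (CSG G k T).Walk X₀ Y₀) (Q : (CSG G k (T \ {v})).Walk x₀ y₀)
    (hQP : ∀ e ∈ Q.edges, ∃ e' ∈ P.edges, e = Sym2.map (quotProj (csgHfg G k T v)) e') :
    walkWeight (csgLabel G k (T \ {v})) Q ≤ walkWeight (csgLabel G k T) P := by
  set φ := quotProj (csgHfg G k T v) with hφ
  have hQP' : ∀ x' y', s(x', y') ∈ Q.edges →
      ∃ A B, s(A, B) ∈ P.edges ∧ x' = φ A ∧ y' = φ B := by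
    intro x' y' he
    obtain ⟨e', he', heq⟩ := hQP _ he
    induction e' using Sym2.ind with
    | _ A B =>
      rw [Sym2.map_pair_eq, Sym2.eq_iff] at heq
      rcases heq with ⟨h1, h2⟩ | ⟨h1, h2⟩
      · exact ⟨A, B, he', h1, h2⟩
      · exact ⟨B, A, by rwa [Sym2.eq_swap] at he', h1, h2⟩
  unfold walkWeight
  letI instT := Classical.decEq (CSGNode G k T)
  letI instT' := Classical.decEq (CSGNode G k (T \ {v}))
  set ℓ' := csgLabel G k (T \ {v}) with hℓ'
  set ℓ := csgLabel G k T with hℓ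
  set S : CSGNode G k (T \ {v}) → Finset (CSGNode G k T) :=
    fun x' => P.support.toFinset.filter (fun A => φ A = x') with hS
  have key : ∀ x' ∈ Q.support.toFinset,
      ((⋃ y' ∈ Q.toSubgraph.neighborSet x', Set.range (ℓ' y')) \ Set.range (ℓ' x')).ncard
      ≤ ∑ A ∈ S x',
        ((⋃ B ∈ P.toSubgraph.neighborSet A, Set.range (ℓ B)) \ Set.range (ℓ A)).ncard := by
    intro x' _
    have hsub : (⋃ y' ∈ Q.toSubgraph.neighborSet x', Set.range (ℓ' y')) \ Set.range (ℓ' x')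
        ⊆ ⋃ A ∈ S x',
          ((⋃ B ∈ P.toSubgraph.neighborSet A, Set.range (ℓ B)) \ Set.range (ℓ A)) := by
      rintro c ⟨hc1, hc2⟩
      rw [Set.mem_iUnion₂] at hc1
      obtain ⟨y', hy', hcy⟩ := hc1
      have hedge : s(x', y') ∈ Q.edges :=
        Q.mem_edges_toSubgraph.mp (Subgraph.mem_edgeSet.mpr hy')
      obtain ⟨A, B, hABP, hxA, hyB⟩ := hQP' x' y' hedge
      have hKAdj : (CSG G k T).Adj A B := P.adj_of_mem_edges hABP
      have hneAB : φ A ≠ φ B := by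
        rw [← hxA, ← hyB]
        exact (Q.adj_of_mem_edges hedge).1
      have hkey := csg_key (v := v) hT hKAdj hneAB
      have hcAB : c ∈ Set.range (ℓ B) \ Set.range (ℓ A) := by
        apply hkey
        constructor
        · rw [← hℓ', ← hφ, ← hyB]; exact hcy
        · rw [← hℓ', ← hφ, ← hxA]; exact hc2
      have hAS : A ∈ S x' := by
        rw [hS]
        exact Finset.mem_filter.mpr ⟨List.mem_toFinset.mpr (P.fst_mem_support_of_mem_edges hABP),
          hxA.symm⟩
      refine Set.mem_biUnion hAS ⟨?_, hcAB.2⟩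
      have hBnb : B ∈ P.toSubgraph.neighborSet A :=
        Subgraph.mem_edgeSet.mp (P.mem_edges_toSubgraph.mpr hABP)
      exact Set.mem_biUnion hBnb hcAB.1
    calc ((⋃ y' ∈ Q.toSubgraph.neighborSet x', Set.range (ℓ' y')) \ Set.range (ℓ' x')).ncard
        ≤ (⋃ A ∈ S x',
            ((⋃ B ∈ P.toSubgraph.neighborSet A, Set.range (ℓ B)) \ Set.range (ℓ A))).ncard :=
          Set.ncard_le_ncard hsub (Set.toFinite _)
      _ ≤ _ := ncard_biUnion_le _ _
  have hdisj : (↑Q.support.toFinset : Set (CSGNode G k (T \ {v}))).PairwiseDisjoint S := by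
    intro x1 _ x2 _ hne12
    exact Finset.disjoint_left.mpr fun _ hA1 hA2 =>
      hne12 ((Finset.mem_filter.mp hA1).2.symm.trans (Finset.mem_filter.mp hA2).2)
  calc ∑ x' ∈ Q.support.toFinset,
        ((⋃ y' ∈ Q.toSubgraph.neighborSet x', Set.range (ℓ' y')) \ Set.range (ℓ' x')).ncard
      ≤ ∑ x' ∈ Q.support.toFinset, ∑ A ∈ S x',
        ((⋃ B ∈ P.toSubgraph.neighborSet A, Set.range (ℓ B)) \ Set.range (ℓ A)).ncard :=
        Finset.sum_le_sum key
    _ = ∑ A ∈ Q.support.toFinset.biUnion S,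
        ((⋃ B ∈ P.toSubgraph.neighborSet A, Set.range (ℓ B)) \ Set.range (ℓ A)).ncard :=
        (Finset.sum_biUnion hdisj).symm
    _ ≤ ∑ A ∈ P.support.toFinset,
        ((⋃ B ∈ P.toSubgraph.neighborSet A, Set.range (ℓ B)) \ Set.range (ℓ A)).ncard := by
        apply Finset.sum_le_sum_of_subset
        intro A hA
        obtain ⟨x', _, hAx⟩ := Finset.mem_biUnion.mp hA
        rw [hS] at hAx
        exact (Finset.mem_filter.mp hAx).1

end Concrete

/-- (forget step for essential information) if `C^c_k(G,T)` is a forest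
in which the `α`-node and the `β`-node lie in the same component, with unique
`α`-`β`-path `P`, then `C^c_k(G, T∖{v})` is a forest with a unique `α`-`β`-path `P'`,
and `w(P') ≤ w(P)`. -/
theorem statement_17 {V : Type} [Fintype V] [DecidableEq V] (G : SimpleGraph V)
    (k : ℕ) (hk : 3 ≤ k) (hconn : LConnected G (k - 2)) (hchord : Chordal G)
    (hcol : ∃ α : V → Fin k, IsColoring G k α)
    (T : Set V) (hT : G.IsClique T) (hcard : k - 1 ≤ T.ncard) (v : V) (hv : v ∈ T)
    (α β : {f : V → Fin k // IsColoring G k f})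
    (hforest : IsAcyclic (CSG G k T))
    (P : (CSG G k T).Walk (csgNode G k T α) (csgNode G k T β)) (hP : P.IsPath) :
    IsAcyclic (CSG G k (T \ {v})) ∧
      ∃ P' : (CSG G k (T \ {v})).Walk (csgNode G k (T \ {v}) α) (csgNode G k (T \ {v}) β),
        P'.IsPath ∧
        (∀ Q : (CSG G k (T \ {v})).Walk (csgNode G k (T \ {v}) α)
            (csgNode G k (T \ {v}) β), Q.IsPath → Q = P') ∧
        walkWeight (csgLabel G k (T \ {v})) P' ≤ walkWeight (csgLabel G k T) P := by
  classical
  have hfg := csgHfg G k T v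
  have hforest' : IsAcyclic (CSG G k (T \ {v})) := quotGraph_acyclic hfg hforest
  refine ⟨hforest', ?_⟩
  obtain ⟨Q₀, hQ₀⟩ := push_walk hfg P
  have hα : quotProj hfg (csgNode G k T α) = csgNode G k (T \ {v}) α := quotProj_mk hfg α
  have hβ : quotProj hfg (csgNode G k T β) = csgNode G k (T \ {v}) β := quotProj_mk hfg β
  let Q₁ : (CSG G k (T \ {v})).Walk (csgNode G k (T \ {v}) α) (csgNode G k (T \ {v}) β) :=
    Q₀.copy hα hβ
  have hQ₁ : ∀ e ∈ Q₁.edges, ∃ e' ∈ P.edges, e = Sym2.map (quotProj hfg) e' := by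
    intro e he
    rw [show Q₁.edges = Q₀.edges from Walk.edges_copy _ _ _] at he
    exact hQ₀ e he
  refine ⟨Q₁.bypass, Walk.bypass_isPath _, ?_, ?_⟩
  · intro Q hQ
    exact congrArg Subtype.val (hforest'.path_unique ⟨Q, hQ⟩ ⟨Q₁.bypass, Walk.bypass_isPath _⟩)
  · refine csg_weight_le hT P Q₁.bypass ?_
    intro e he
    exact hQ₁ e (Walk.edges_bypass_subset _ he)
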